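/- For F as in Example 9.2 (the explicit piecewise-smooth map ℂ³ → ℝ × ℂ), the fibre F^{-1}(0, b) equals {(z₁,z₂,z₃) : |z₁| = |z₂| = |z₃ − b|, Im((z₃−b)z₁z₂) = 0, Re((z₃−b)z₁z₂) ≤ 0} ∪ {(0,0,b)}-type translate of the Harvey–Lawson T²-cone N₀, and is singular precisely at the single point (0,0,b). -/

import Mathlib

open Complex

/-- The explicit piecewise-smooth special Lagrangian fibration F : ℂ³ → ℝ × ℂ of
Example 9.2: F(z₁,z₂,z₃) = (a,b) with 2a = |z₁|²−|z₂|², b = z₃ when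
a = z₁ = z₂ = 0, b = z₃ + z̄₁z̄₂/|z₁| when a ≥ 0, z₁ ≠ 0, and
b = z₃ + z̄₁z̄₂/|z₂| when a < 0. -/
noncomputable def SLfib (p : ℂ × ℂ × ℂ) : ℝ × ℂ :=
  ((‖p.1‖ ^ 2 - ‖p.2.1‖ ^ 2) / 2,
   if 0 ≤ ‖p.1‖ ^ 2 - ‖p.2.1‖ ^ 2 then
     (if p.1 ≠ 0 then
        p.2.2 + (starRingEnd ℂ p.1) * (starRingEnd ℂ p.2.1) / (‖p.1‖ : ℂ)
      else p.2.2)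
   else
     p.2.2 + (starRingEnd ℂ p.1) * (starRingEnd ℂ p.2.1) / (‖p.2.1‖ : ℂ))

private lemma neg_of_real (w : ℂ) (h0 : w.im = 0) (hle : w.re ≤ 0) :
    w = -(‖w‖ : ℂ) := by
  have hw : w = (w.re : ℂ) := Complex.ext rfl (by simp [h0])
  rw [hw, Complex.norm_real, Real.norm_eq_abs, _root_.abs_of_nonpos hle]
  push_cast
  ring

private lemma conj_prod (z₁ z₂ : ℂ) :
    starRingEnd ℂ z₁ * starRingEnd ℂ z₂ * (z₁ * z₂)
      = ((‖z₁‖ : ℂ))^2 * ((‖z₂‖ : ℂ))^2 := by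
  rw [mul_mul_mul_comm, mul_comm (starRingEnd ℂ z₁) z₁, mul_comm (starRingEnd ℂ z₂) z₂,
    Complex.mul_conj, Complex.mul_conj]
  push_cast [Complex.normSq_eq_norm_sq]
  ring

private lemma key18 (b z₁ z₂ z₃ : ℂ) : SLfib (z₁, z₂, z₃) = ((0 : ℝ), b) ↔
    (‖z₁‖ = ‖z₂‖ ∧
      ‖z₂‖ = ‖z₃ - b‖ ∧
      ((z₃ - b) * z₁ * z₂).im = 0 ∧
      ((z₃ - b) * z₁ * z₂).re ≤ 0) := by
  simp only [SLfib, Prod.mk.injEq]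
  constructor
  · rintro ⟨ha, hb⟩
    have h12 : ‖z₁‖ = ‖z₂‖ := by
      have h1 := norm_nonneg z₁
      have h2 := norm_nonneg z₂
      nlinarith [ha]
    have hge : 0 ≤ ‖z₁‖ ^ 2 - ‖z₂‖ ^ 2 := by rw [h12]; simp
    rw [if_pos hge] at hb
    by_cases h1 : z₁ = 0
    · have h2 : z₂ = 0 := by
        rw [← norm_eq_zero, ← h12, h1, norm_zero]
      rw [if_neg (by simp [h1])] at hb
      simp [h1, h2, ← h12, hb]
    · rw [if_pos h1] at hb
      have hc : z₃ - b = -(starRingEnd ℂ z₁ * starRingEnd ℂ z₂ / (‖z₁‖ : ℂ)) := by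
        rw [← hb]; ring
      have ha1 : ‖z₁‖ ≠ 0 := by simpa using h1
      have habs : ((‖z₁‖ : ℂ)) ≠ 0 := by simpa using ha1
      have hthis : (z₃ - b) * z₁ * z₂ =
          -((‖z₁‖ : ℂ) * (‖z₂‖ : ℂ)^2) := by
        have := conj_prod z₁ z₂
        have hinv : (‖z₁‖ : ℂ) * (‖z₁‖ : ℂ)⁻¹ = 1 := mul_inv_cancel₀ habs
        rw [hc, div_eq_mul_inv]
        linear_combination (-(‖z₁‖ : ℂ)⁻¹) * this - (‖z₁‖ : ℂ) * (‖z₂‖ : ℂ)^2 * hinv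
      have hthis' : (z₃ - b) * z₁ * z₂ =
          ((-(‖z₁‖ * ‖z₂‖ ^ 2) : ℝ) : ℂ) := by
        rw [hthis]; push_cast; ring
      refine ⟨h12, ?_, ?_, ?_⟩
      · rw [hc]
        simp [norm_div, Complex.norm_real,
          _root_.abs_of_nonneg (norm_nonneg z₁), h12]
      · rw [hthis', Complex.ofReal_im]
      · rw [hthis', Complex.ofReal_re]
        simp only [neg_nonpos]
        positivity
  · rintro ⟨h12, h23, him, hre⟩
    have hge : 0 ≤ ‖z₁‖ ^ 2 - ‖z₂‖ ^ 2 := by rw [h12]; simp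
    refine ⟨by rw [h12]; ring, ?_⟩
    rw [if_pos hge]
    by_cases h1 : z₁ = 0
    · rw [if_neg (by simp [h1])]
      have h0 : ‖z₃ - b‖ = 0 := by rw [← h23, ← h12, h1, norm_zero]
      have : z₃ - b = 0 := by rwa [norm_eq_zero] at h0
      linear_combination this
    · rw [if_pos h1]
      have ha1 : ‖z₁‖ ≠ 0 := by simpa using h1
      have habs : ((‖z₁‖ : ℂ)) ≠ 0 := by simpa using ha1
      have h2 : z₂ ≠ 0 := by
        intro h; rw [h, norm_zero] at h12; exact ha1 h12
      have hz12 : z₁ * z₂ ≠ 0 := mul_ne_zero h1 h2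
      have hw : (z₃ - b) * z₁ * z₂ = -((‖z₁‖ : ℂ)^3) := by
        have := neg_of_real _ him hre
        rw [this, norm_mul, norm_mul, ← h23, ← h12]
        push_cast; ring
      have hcc := conj_prod z₁ z₂
      have h12c : ((‖z₁‖ : ℂ)) = ((‖z₂‖ : ℂ)) := by rw [h12]
      apply mul_right_cancel₀ hz12
      have hinv : (‖z₁‖ : ℂ) * (‖z₁‖ : ℂ)⁻¹ = 1 := mul_inv_cancel₀ habs
      rw [div_eq_mul_inv]
      linear_combination hw + (‖z₁‖ : ℂ)⁻¹ * hcc -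
        (‖z₁‖ : ℂ)⁻¹ * (‖z₁‖ : ℂ)^2 * ((‖z₁‖ : ℂ) + (‖z₂‖ : ℂ)) * h12c + (‖z₁‖ : ℂ)^3 * hinv

theorem stmt18 (b : ℂ) :
    SLfib ⁻¹' {((0 : ℝ), b)} =
      {p : ℂ × ℂ × ℂ |
        ‖p.1‖ = ‖p.2.1‖ ∧
        ‖p.2.1‖ = ‖p.2.2 - b‖ ∧
        ((p.2.2 - b) * p.1 * p.2.1).im = 0 ∧
        ((p.2.2 - b) * p.1 * p.2.1).re ≤ 0} ∧
    ((0 : ℂ), (0 : ℂ), b) ∈ SLfib ⁻¹' {((0 : ℝ), b)} ∧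
    {p ∈ SLfib ⁻¹' {((0 : ℝ), b)} | p.1 = 0 ∧ p.2.1 = 0}
      = {((0 : ℂ), (0 : ℂ), b)} := by
  refine ⟨?_, ?_, ?_⟩
  · ext ⟨z₁, z₂, z₃⟩
    simpa using key18 b z₁ z₂ z₃
  · show SLfib (0, 0, b) = ((0:ℝ), b)
    rw [key18]
    simp
  · ext ⟨z₁, z₂, z₃⟩
    simp only [Set.mem_setOf_eq, Set.mem_preimage, Set.mem_singleton_iff, key18,
      Prod.mk.injEq]
    constructor
    · rintro ⟨⟨h12, h23, -, -⟩, hz1, hz2⟩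
      refine ⟨hz1, hz2, ?_⟩
      rw [hz2, norm_zero] at h23
      have : z₃ - b = 0 := by
        rw [← norm_eq_zero]; exact h23.symm
      linear_combination this
    · rintro ⟨h1, h2, h3⟩
      subst h1; subst h2; subst h3
      simp
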